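/- The comultiplication Δ_D : D_H → D_H ⊗ D_H and the counit ε_D : D_H → k are unital algebra homomorphisms, where D_H = H ⊗ H* carries the tensor product algebra structure and D_H ⊗ D_H the tensor product algebra structure of two copies of D_H; hence D_H is a bialgebra. -/

import Mathlib

set_option maxHeartbeats 1000000
set_option synthInstance.maxHeartbeats 200000


open scoped TensorProduct

noncomputable section

variable (k H : Type*) [Field k] [Ring H] [HopfAlgebra k H]

/-- The convolution product on the linear dual `H*` of `H`, as a linear map
`H* ⊗ H* → H*`: it sends `x ⊗ y` to `a ↦ x(a_(1)) y(a_(2))`. -/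
def convL : Module.Dual k H ⊗[k] Module.Dual k H →ₗ[k] Module.Dual k H :=
  LinearMap.lcomp k k (Coalgebra.comul (R := k) (A := H)) ∘ₗ
    TensorProduct.dualDistrib k H H

/-- The multiplication of the tensor product algebra `D_H = H ⊗ H*`, where `H*` carries
the convolution product: `(f ⊗ x)(g ⊗ y) = fg ⊗ (x · y)`. -/
def mulD : (H ⊗[k] Module.Dual k H) ⊗[k] (H ⊗[k] Module.Dual k H) →ₗ[k]
    H ⊗[k] Module.Dual k H :=
  TensorProduct.map (LinearMap.mul' k H) (convL k H) ∘ₗ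
    (TensorProduct.tensorTensorTensorComm k H (Module.Dual k H) H
      (Module.Dual k H)).toLinearMap

/-- The unit `1 ⊗ ε` of the tensor product algebra `D_H = H ⊗ H*`. -/
def oneD : H ⊗[k] Module.Dual k H :=
  (1 : H) ⊗ₜ[k] (Coalgebra.counit (R := k) (A := H))

/-- The counit `ε_D(f ⊗ x) = ε(f) x(1)` of the Drinfeld codouble `D_H = H ⊗ H*`. -/
def epsD : H ⊗[k] Module.Dual k H →ₗ[k] k :=
  LinearMap.mul' k k ∘ₗ
    TensorProduct.map (Coalgebra.counit (R := k) (A := H))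
      (LinearMap.applyₗ (1 : H) : Module.Dual k H →ₗ[k] k)

variable {k H}

/-- The element `w = Σ_j e_j ⊗ e^j ∈ H ⊗ H*`. -/
def wElem {n : ℕ} (b : Module.Basis (Fin n) k H) : H ⊗[k] Module.Dual k H :=
  ∑ j : Fin n, b j ⊗ₜ[k] b.coord j

/-- The element `w⁻¹ = (S ⊗ id)(w) = Σ_j S(e_j) ⊗ e^j ∈ H ⊗ H*`. -/
def wElemInv {n : ℕ} (b : Module.Basis (Fin n) k H) : H ⊗[k] Module.Dual k H :=
  ∑ j : Fin n, HopfAlgebra.antipode (R := k) (b j) ⊗ₜ[k] b.coord j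

/-- Conjugation `Ad(w)(z) = w z w⁻¹` by `w` in the tensor product algebra `H ⊗ H*`. -/
def adW {n : ℕ} (b : Module.Basis (Fin n) k H) :
    H ⊗[k] Module.Dual k H →ₗ[k] H ⊗[k] Module.Dual k H :=
  mulD k H ∘ₗ
    TensorProduct.mk k (H ⊗[k] Module.Dual k H) (H ⊗[k] Module.Dual k H) (wElem b) ∘ₗ
    mulD k H ∘ₗ
    (TensorProduct.mk k (H ⊗[k] Module.Dual k H) (H ⊗[k] Module.Dual k H)).flip
      (wElemInv b)

/-- The comultiplication `Δ_D = (id ⊗ σ ⊗ id) ∘ (id ⊗ Ad(w) ⊗ id) ∘ (Δ ⊗ Δ̂)` of the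
Drinfeld codouble `D_H = H ⊗ H*`, where `Δ̂` is the comultiplication of `(H*)^cop` and
`σ` is the flip map. -/
def deltaD {n : ℕ} (b : Module.Basis (Fin n) k H)
    (Δhat : Module.Dual k H →ₗ[k] Module.Dual k H ⊗[k] Module.Dual k H) :
    H ⊗[k] Module.Dual k H →ₗ[k]
      (H ⊗[k] Module.Dual k H) ⊗[k] (H ⊗[k] Module.Dual k H) :=
  (TensorProduct.assoc k H (Module.Dual k H) (H ⊗[k] Module.Dual k H)).symm.toLinearMap ∘ₗ
    TensorProduct.map (LinearMap.id : H →ₗ[k] H)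
      (TensorProduct.assoc k (Module.Dual k H) H (Module.Dual k H)).toLinearMap ∘ₗ
    TensorProduct.map (LinearMap.id : H →ₗ[k] H)
      (TensorProduct.map (TensorProduct.comm k H (Module.Dual k H)).toLinearMap
        (LinearMap.id : Module.Dual k H →ₗ[k] Module.Dual k H)) ∘ₗ
    TensorProduct.map (LinearMap.id : H →ₗ[k] H)
      (TensorProduct.map (adW b)
        (LinearMap.id : Module.Dual k H →ₗ[k] Module.Dual k H)) ∘ₗ
    TensorProduct.map (LinearMap.id : H →ₗ[k] H)
      (TensorProduct.assoc k H (Module.Dual k H) (Module.Dual k H)).symm.toLinearMap ∘ₗ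
    (TensorProduct.assoc k H H (Module.Dual k H ⊗[k] Module.Dual k H)).toLinearMap ∘ₗ
    TensorProduct.map (Coalgebra.comul (R := k) (A := H)) Δhat

variable (k H)

/-- The multiplication of the tensor product algebra `D_H ⊗ D_H` of two copies of the
tensor product algebra `D_H = H ⊗ H*`: `(d₁ ⊗ d₂)(d₃ ⊗ d₄) = d₁d₃ ⊗ d₂d₄`. -/
def mulDD : ((H ⊗[k] Module.Dual k H) ⊗[k] (H ⊗[k] Module.Dual k H)) ⊗[k]
      ((H ⊗[k] Module.Dual k H) ⊗[k] (H ⊗[k] Module.Dual k H)) →ₗ[k]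
    (H ⊗[k] Module.Dual k H) ⊗[k] (H ⊗[k] Module.Dual k H) :=
  TensorProduct.map (mulD k H) (mulD k H) ∘ₗ
    (TensorProduct.tensorTensorTensorComm k (H ⊗[k] Module.Dual k H)
      (H ⊗[k] Module.Dual k H) (H ⊗[k] Module.Dual k H)
      (H ⊗[k] Module.Dual k H)).toLinearMap

namespace DrinAux

open TensorProduct Coalgebra

variable {k H}

lemma convL_apply (u : Module.Dual k H ⊗[k] Module.Dual k H) (a : H) :
    convL k H u a = TensorProduct.dualDistrib k H H u (Coalgebra.comul a) := rfl

lemma convL_repr (x y : Module.Dual k H) {a : H} {ι : Type*} (r : Coalgebra.Repr k a ι) :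
    convL k H (x ⊗ₜ[k] y) a = ∑ i ∈ r.index, x (r.left i) * y (r.right i) := by
  rw [convL_apply, ← r.eq, map_sum]
  simp

lemma convL_counit_left (x : Module.Dual k H) :
    convL k H ((Coalgebra.counit (R := k) (A := H)) ⊗ₜ[k] x) = x := by
  ext a
  set r := ℛ k a
  rw [convL_repr _ _ r]
  have h := congrArg (TensorProduct.lid k H) (Coalgebra.sum_counit_tmul_eq r)
  simp only [map_sum, TensorProduct.lid_tmul, one_smul] at h
  calc ∑ i ∈ r.index, Coalgebra.counit (r.left i) * x (r.right i)
      = x (∑ i ∈ r.index, Coalgebra.counit (R := k) (r.left i) • r.right i) := by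
        rw [map_sum]; simp [smul_eq_mul]
    _ = x a := by rw [h]

lemma convL_counit_right (x : Module.Dual k H) :
    convL k H (x ⊗ₜ[k] (Coalgebra.counit (R := k) (A := H))) = x := by
  ext a
  set r := ℛ k a
  rw [convL_repr _ _ r]
  have h := congrArg (TensorProduct.rid k H) (Coalgebra.sum_tmul_counit_eq r)
  simp only [map_sum, TensorProduct.rid_tmul, one_smul] at h
  calc ∑ i ∈ r.index, x (r.left i) * Coalgebra.counit (r.right i)
      = x (∑ i ∈ r.index, Coalgebra.counit (R := k) (r.right i) • r.left i) := by
        rw [map_sum]; simp [smul_eq_mul, mul_comm]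
    _ = x a := by rw [h]


lemma convL_assoc (x y z : Module.Dual k H) :
    convL k H (convL k H (x ⊗ₜ[k] y) ⊗ₜ[k] z) = convL k H (x ⊗ₜ[k] (convL k H (y ⊗ₜ[k] z))) := by
  ext a
  set r := ℛ k a
  set r1 : ∀ i : H × H, Coalgebra.Repr k (r.left i) (H × H) := fun i => ℛ k (r.left i) with hr1
  set r2 : ∀ i : H × H, Coalgebra.Repr k (r.right i) (H × H) := fun i => ℛ k (r.right i) with hr2
  have key := Coalgebra.sum_tmul_tmul_eq r r1 r2
  set G : H ⊗[k] (H ⊗[k] H) →ₗ[k] k :=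
    TensorProduct.dualDistrib k H (H ⊗[k] H) (x ⊗ₜ[k] (TensorProduct.dualDistrib k H H (y ⊗ₜ[k] z)))
    with hG
  have hGt : ∀ (u v w : H), G (u ⊗ₜ[k] (v ⊗ₜ[k] w)) = x u * (y v * z w) := by
    intro u v w; simp [hG]
  have key2 := congrArg G key
  rw [map_sum, map_sum] at key2
  simp only [map_sum, hGt] at key2
  calc convL k H (convL k H (x ⊗ₜ[k] y) ⊗ₜ[k] z) a
      = ∑ i ∈ r.index, convL k H (x ⊗ₜ[k] y) (r.left i) * z (r.right i) := convL_repr _ _ r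
    _ = ∑ i ∈ r.index, ∑ j ∈ (r1 i).index,
          x ((r1 i).left j) * ((y ((r1 i).right j)) * z (r.right i)) := by
        refine Finset.sum_congr rfl fun i _ => ?_
        rw [convL_repr _ _ (r1 i), Finset.sum_mul]
        exact Finset.sum_congr rfl fun j _ => by ring
    _ = ∑ i ∈ r.index, ∑ j ∈ (r2 i).index,
          x (r.left i) * (y ((r2 i).left j) * z ((r2 i).right j)) := key2
    _ = convL k H (x ⊗ₜ[k] (convL k H (y ⊗ₜ[k] z))) a := by
        rw [convL_repr _ _ r]
        refine Finset.sum_congr rfl fun i _ => ?_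
        rw [convL_repr _ _ (r2 i), Finset.mul_sum]

lemma mulD_tmul (f g : H) (x y : Module.Dual k H) :
    mulD k H ((f ⊗ₜ[k] x) ⊗ₜ[k] (g ⊗ₜ[k] y)) = (f * g) ⊗ₜ[k] convL k H (x ⊗ₜ[k] y) := by
  simp [mulD]

/-- The tensor-algebra `D_H` is associative. -/
lemma mulD_assoc (z₁ z₂ z₃ : H ⊗[k] Module.Dual k H) :
    mulD k H (mulD k H (z₁ ⊗ₜ[k] z₂) ⊗ₜ[k] z₃) = mulD k H (z₁ ⊗ₜ[k] mulD k H (z₂ ⊗ₜ[k] z₃)) := by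
  induction z₁ using TensorProduct.induction_on with
  | zero => simp
  | add u v hu hv => simp only [add_tmul, map_add, hu, hv]
  | tmul f x =>
    induction z₂ using TensorProduct.induction_on with
    | zero => simp
    | add u v hu hv => simp only [add_tmul, tmul_add, map_add, hu, hv]
    | tmul g y =>
      induction z₃ using TensorProduct.induction_on with
      | zero => simp
      | add u v hu hv => simp only [add_tmul, tmul_add, map_add, hu, hv]
      | tmul h z => simp only [mulD_tmul, mul_assoc, convL_assoc]

lemma mulD_one_left (z : H ⊗[k] Module.Dual k H) :
    mulD k H (oneD k H ⊗ₜ[k] z) = z := by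
  induction z using TensorProduct.induction_on with
  | zero => simp
  | add u v hu hv => simp only [tmul_add, map_add, hu, hv]
  | tmul g y => rw [oneD, mulD_tmul, one_mul, convL_counit_left]

lemma mulD_one_right (z : H ⊗[k] Module.Dual k H) :
    mulD k H (z ⊗ₜ[k] oneD k H) = z := by
  induction z using TensorProduct.induction_on with
  | zero => simp
  | add u v hu hv => simp only [add_tmul, map_add, hu, hv]
  | tmul g y => rw [oneD, mulD_tmul, mul_one, convL_counit_right]

/-- The comparison map `E : H ⊗ H* → End(H)`. -/
def Emap : H ⊗[k] Module.Dual k H →ₗ[k] (H →ₗ[k] H) :=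
  dualTensorHom k H H ∘ₗ (TensorProduct.comm k H (Module.Dual k H)).toLinearMap

lemma Emap_tmul (f : H) (x : Module.Dual k H) (a : H) :
    Emap (f ⊗ₜ[k] x) a = x a • f := by
  simp [Emap]

lemma Emap_injective {n : ℕ} (b : Module.Basis (Fin n) k H) : Function.Injective (Emap (k := k) (H := H)) := by
  have : Emap (k := k) (H := H) =
      (dualTensorHomEquivOfBasis (N := H) b).toLinearMap ∘ₗ
        (TensorProduct.comm k H (Module.Dual k H)).toLinearMap := by
    rw [dualTensorHomEquivOfBasis_toLinearMap]; rfl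
  rw [this]
  exact (dualTensorHomEquivOfBasis (N := H) b).injective.comp
    (TensorProduct.comm k H (Module.Dual k H)).injective

lemma Emap_mulD (z z' : H ⊗[k] Module.Dual k H) (a : H) {ι : Type*} (r : Coalgebra.Repr k a ι) :
    Emap (mulD k H (z ⊗ₜ[k] z')) a = ∑ i ∈ r.index, Emap z (r.left i) * Emap z' (r.right i) := by
  induction z using TensorProduct.induction_on with
  | zero => simp
  | add u v hu hv => simp only [add_tmul, map_add, LinearMap.add_apply, hu, hv,
      LinearMap.add_apply, add_mul, Finset.sum_add_distrib]
  | tmul f x =>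
    induction z' using TensorProduct.induction_on with
    | zero => simp
    | add u v hu hv => simp only [tmul_add, map_add, LinearMap.add_apply, hu, hv,
        mul_add, Finset.sum_add_distrib]
    | tmul g y =>
      rw [mulD_tmul, Emap_tmul, convL_repr _ _ r]
      rw [Finset.sum_smul]
      refine Finset.sum_congr rfl fun i _ => ?_
      rw [Emap_tmul, Emap_tmul, smul_mul_smul_comm]

lemma Emap_oneD (a : H) : Emap (oneD k H) a = algebraMap k H (Coalgebra.counit a) := by
  rw [oneD, Emap_tmul, Algebra.algebraMap_eq_smul_one]

lemma Emap_wElem {n : ℕ} (b : Module.Basis (Fin n) k H) (a : H) : Emap (wElem b) a = a := by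
  rw [wElem, map_sum]
  simp only [LinearMap.coe_sum, Finset.sum_apply, Emap_tmul, Module.Basis.coord_apply]
  exact b.sum_repr a

lemma Emap_wElemInv {n : ℕ} (b : Module.Basis (Fin n) k H) (a : H) :
    Emap (wElemInv b) a = HopfAlgebra.antipode (R := k) a := by
  rw [wElemInv, map_sum]
  simp only [LinearMap.coe_sum, Finset.sum_apply, Emap_tmul, Module.Basis.coord_apply]
  calc ∑ i : Fin n, (b.repr a) i • HopfAlgebra.antipode (R := k) (b i)
      = HopfAlgebra.antipode (R := k) (∑ i : Fin n, (b.repr a) i • b i) := by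
        rw [map_sum]; simp only [map_smul]
    _ = HopfAlgebra.antipode (R := k) a := congrArg _ (b.sum_repr a)

lemma mulD_wElem_wElemInv {n : ℕ} (b : Module.Basis (Fin n) k H) :
    mulD k H (wElem b ⊗ₜ[k] wElemInv b) = oneD k H := by
  refine Emap_injective b ?_
  ext a
  set r := ℛ k a
  rw [Emap_mulD _ _ a r, Emap_oneD]
  calc ∑ i ∈ r.index, Emap (wElem b) (r.left i) * Emap (wElemInv b) (r.right i)
      = ∑ i ∈ r.index, r.left i * HopfAlgebra.antipode (R := k) (r.right i) := by
        refine Finset.sum_congr rfl fun i _ => by rw [Emap_wElem, Emap_wElemInv]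
    _ = algebraMap k H (Coalgebra.counit a) := HopfAlgebra.sum_mul_antipode_eq_algebraMap_counit r

lemma mulD_wElemInv_wElem {n : ℕ} (b : Module.Basis (Fin n) k H) :
    mulD k H (wElemInv b ⊗ₜ[k] wElem b) = oneD k H := by
  refine Emap_injective b ?_
  ext a
  set r := ℛ k a
  rw [Emap_mulD _ _ a r, Emap_oneD]
  calc ∑ i ∈ r.index, Emap (wElemInv b) (r.left i) * Emap (wElem b) (r.right i)
      = ∑ i ∈ r.index, HopfAlgebra.antipode (R := k) (r.left i) * r.right i := by
        refine Finset.sum_congr rfl fun i _ => by rw [Emap_wElem, Emap_wElemInv]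
    _ = algebraMap k H (Coalgebra.counit a) := HopfAlgebra.sum_antipode_mul_eq_algebraMap_counit r

lemma adW_apply {n : ℕ} (b : Module.Basis (Fin n) k H) (z : H ⊗[k] Module.Dual k H) :
    adW b z = mulD k H (wElem b ⊗ₜ[k] mulD k H (z ⊗ₜ[k] wElemInv b)) := rfl

lemma adW_mul {n : ℕ} (b : Module.Basis (Fin n) k H) (z z' : H ⊗[k] Module.Dual k H) :
    adW b (mulD k H (z ⊗ₜ[k] z')) = mulD k H (adW b z ⊗ₜ[k] adW b z') := by
  simp only [adW_apply]
  conv_rhs => rw [mulD_assoc, mulD_assoc z (wElemInv b), ← mulD_assoc (wElemInv b) (wElem b),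
    mulD_wElemInv_wElem, mulD_one_left]
  rw [mulD_assoc]

lemma adW_one {n : ℕ} (b : Module.Basis (Fin n) k H) : adW b (oneD k H) = oneD k H := by
  rw [adW_apply, mulD_one_left, mulD_wElem_wElemInv]

/-- Componentwise convolution on `H* ⊗ H*`. -/
def convLL : (Module.Dual k H ⊗[k] Module.Dual k H) ⊗[k]
    (Module.Dual k H ⊗[k] Module.Dual k H) →ₗ[k] Module.Dual k H ⊗[k] Module.Dual k H :=
  TensorProduct.map (convL k H) (convL k H) ∘ₗ
    (TensorProduct.tensorTensorTensorComm k (Module.Dual k H) (Module.Dual k H)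
      (Module.Dual k H) (Module.Dual k H)).toLinearMap

lemma convLL_tmul (x₁ x₂ y₁ y₂ : Module.Dual k H) :
    convLL ((x₁ ⊗ₜ[k] x₂) ⊗ₜ[k] (y₁ ⊗ₜ[k] y₂)) =
      convL k H (x₁ ⊗ₜ[k] y₁) ⊗ₜ[k] convL k H (x₂ ⊗ₜ[k] y₂) := by
  simp [convLL]

lemma dd_injective {n : ℕ} (b : Module.Basis (Fin n) k H) :
    Function.Injective (TensorProduct.dualDistrib k H H) := by
  have h : (TensorProduct.dualDistrib k H H) =
      (TensorProduct.dualDistribEquivOfBasis b b).toLinearMap := rfl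
  rw [h]
  exact (TensorProduct.dualDistribEquivOfBasis b b).injective

lemma dd_convLL (u v : Module.Dual k H ⊗[k] Module.Dual k H) {a c : H}
    {ι κ : Type*} (ra : Coalgebra.Repr k a ι) (rc : Coalgebra.Repr k c κ) :
    TensorProduct.dualDistrib k H H (convLL (u ⊗ₜ[k] v)) (a ⊗ₜ[k] c) =
      ∑ i ∈ ra.index, ∑ j ∈ rc.index,
        TensorProduct.dualDistrib k H H u (ra.left i ⊗ₜ[k] rc.left j) *
          TensorProduct.dualDistrib k H H v (ra.right i ⊗ₜ[k] rc.right j) := by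
  induction u using TensorProduct.induction_on with
  | zero => simp
  | add u₁ u₂ h₁ h₂ => simp only [add_tmul, map_add, LinearMap.add_apply, h₁, h₂, add_mul,
      Finset.sum_add_distrib]
  | tmul x₁ x₂ =>
    induction v using TensorProduct.induction_on with
    | zero => simp
    | add v₁ v₂ h₁ h₂ => simp only [tmul_add, map_add, LinearMap.add_apply, h₁, h₂, mul_add,
        Finset.sum_add_distrib]
    | tmul y₁ y₂ =>
      rw [convLL_tmul, TensorProduct.dualDistrib_apply, convL_repr _ _ ra, convL_repr _ _ rc,
        Finset.sum_mul_sum]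
      refine Finset.sum_congr rfl fun i _ => Finset.sum_congr rfl fun j _ => ?_
      rw [TensorProduct.dualDistrib_apply, TensorProduct.dualDistrib_apply]
      ring

lemma dhat_convL {n : ℕ} (b : Module.Basis (Fin n) k H)
    (Δhat : Module.Dual k H →ₗ[k] Module.Dual k H ⊗[k] Module.Dual k H)
    (hΔhat : ∀ (x : Module.Dual k H) (a c : H),
      TensorProduct.dualDistrib k H H (Δhat x) (a ⊗ₜ[k] c) = x (c * a))
    (x y : Module.Dual k H) :
    Δhat (convL k H (x ⊗ₜ[k] y)) = convLL (Δhat x ⊗ₜ[k] Δhat y) := by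
  refine dd_injective b ?_
  refine TensorProduct.ext' fun a c => ?_
  set ra := ℛ k a
  set rc := ℛ k c
  rw [hΔhat, dd_convLL _ _ ra rc, convL_apply, Bialgebra.comul_mul, ← ra.eq, ← rc.eq,
    Finset.sum_mul_sum]
  simp only [Algebra.TensorProduct.tmul_mul_tmul, map_sum, TensorProduct.dualDistrib_apply]
  rw [Finset.sum_comm]
  refine Finset.sum_congr rfl fun i _ => Finset.sum_congr rfl fun j _ => ?_
  rw [hΔhat, hΔhat]

lemma dhat_counit {n : ℕ} (b : Module.Basis (Fin n) k H)
    (Δhat : Module.Dual k H →ₗ[k] Module.Dual k H ⊗[k] Module.Dual k H)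
    (hΔhat : ∀ (x : Module.Dual k H) (a c : H),
      TensorProduct.dualDistrib k H H (Δhat x) (a ⊗ₜ[k] c) = x (c * a)) :
    Δhat (Coalgebra.counit (R := k) (A := H)) =
      (Coalgebra.counit (R := k) (A := H)) ⊗ₜ[k] (Coalgebra.counit (R := k) (A := H)) := by
  refine dd_injective b ?_
  refine TensorProduct.ext' fun a c => ?_
  rw [hΔhat, TensorProduct.dualDistrib_apply, Bialgebra.counit_mul, mul_comm]

/-- The tail of `deltaD` (everything except `map comul Δhat`). -/
def Phi2 {n : ℕ} (b : Module.Basis (Fin n) k H) :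
    (H ⊗[k] H) ⊗[k] (Module.Dual k H ⊗[k] Module.Dual k H) →ₗ[k]
      (H ⊗[k] Module.Dual k H) ⊗[k] (H ⊗[k] Module.Dual k H) :=
  (TensorProduct.assoc k H (Module.Dual k H) (H ⊗[k] Module.Dual k H)).symm.toLinearMap ∘ₗ
    TensorProduct.map (LinearMap.id : H →ₗ[k] H)
      (TensorProduct.assoc k (Module.Dual k H) H (Module.Dual k H)).toLinearMap ∘ₗ
    TensorProduct.map (LinearMap.id : H →ₗ[k] H)
      (TensorProduct.map (TensorProduct.comm k H (Module.Dual k H)).toLinearMap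
        (LinearMap.id : Module.Dual k H →ₗ[k] Module.Dual k H)) ∘ₗ
    TensorProduct.map (LinearMap.id : H →ₗ[k] H)
      (TensorProduct.map (adW b)
        (LinearMap.id : Module.Dual k H →ₗ[k] Module.Dual k H)) ∘ₗ
    TensorProduct.map (LinearMap.id : H →ₗ[k] H)
      (TensorProduct.assoc k H (Module.Dual k H) (Module.Dual k H)).symm.toLinearMap ∘ₗ
    (TensorProduct.assoc k H H (Module.Dual k H ⊗[k] Module.Dual k H)).toLinearMap

lemma deltaD_eq {n : ℕ} (b : Module.Basis (Fin n) k H)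
    (Δhat : Module.Dual k H →ₗ[k] Module.Dual k H ⊗[k] Module.Dual k H) :
    deltaD b Δhat = Phi2 b ∘ₗ TensorProduct.map (Coalgebra.comul (R := k) (A := H)) Δhat := rfl

/-- The trilinear helper `T f z x` with `T f (g ⊗ ξ) x = (f ⊗ ξ) ⊗ (g ⊗ x)`. -/
def Tmap (f : H) (z : H ⊗[k] Module.Dual k H) (x : Module.Dual k H) :
    (H ⊗[k] Module.Dual k H) ⊗[k] (H ⊗[k] Module.Dual k H) :=
  (TensorProduct.assoc k H (Module.Dual k H) (H ⊗[k] Module.Dual k H)).symm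
    (f ⊗ₜ[k] (TensorProduct.assoc k (Module.Dual k H) H (Module.Dual k H)
      (TensorProduct.map (TensorProduct.comm k H (Module.Dual k H)).toLinearMap
        (LinearMap.id : Module.Dual k H →ₗ[k] Module.Dual k H) (z ⊗ₜ[k] x))))

lemma Tmap_tmul (f g : H) (ξ x : Module.Dual k H) :
    Tmap f (g ⊗ₜ[k] ξ) x = (f ⊗ₜ[k] ξ) ⊗ₜ[k] (g ⊗ₜ[k] x) := by
  simp [Tmap]

lemma Tmap_add₂ (f : H) (z z' : H ⊗[k] Module.Dual k H) (x : Module.Dual k H) :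
    Tmap f (z + z') x = Tmap f z x + Tmap f z' x := by
  unfold Tmap
  rw [TensorProduct.add_tmul, map_add, map_add, TensorProduct.tmul_add, map_add]

lemma Tmap_zero₂ (f : H) (x : Module.Dual k H) : Tmap f 0 x = 0 := by
  unfold Tmap
  rw [TensorProduct.zero_tmul, map_zero, map_zero, TensorProduct.tmul_zero, map_zero]

lemma Phi2_tmul {n : ℕ} (b : Module.Basis (Fin n) k H) (f₁ f₂ : H) (x₁ x₂ : Module.Dual k H) :
    Phi2 b ((f₁ ⊗ₜ[k] f₂) ⊗ₜ[k] (x₁ ⊗ₜ[k] x₂)) = Tmap f₁ (adW b (f₂ ⊗ₜ[k] x₁)) x₂ := by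
  simp [Phi2, Tmap]

lemma mulDD_tmul (z₁ z₂ z₃ z₄ : H ⊗[k] Module.Dual k H) :
    mulDD k H ((z₁ ⊗ₜ[k] z₂) ⊗ₜ[k] (z₃ ⊗ₜ[k] z₄)) =
      mulD k H (z₁ ⊗ₜ[k] z₃) ⊗ₜ[k] mulD k H (z₂ ⊗ₜ[k] z₄) := by
  simp [mulDD]

lemma mulDD_Tmap (f g : H) (x y : Module.Dual k H) (z z' : H ⊗[k] Module.Dual k H) :
    mulDD k H (Tmap f z x ⊗ₜ[k] Tmap g z' y) =
      Tmap (f * g) (mulD k H (z ⊗ₜ[k] z')) (convL k H (x ⊗ₜ[k] y)) := by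
  induction z using TensorProduct.induction_on with
  | zero => simp [Tmap_zero₂, TensorProduct.zero_tmul]
  | add u v hu hv => simp only [Tmap_add₂, TensorProduct.add_tmul, map_add, hu, hv]
  | tmul h ξ =>
    induction z' using TensorProduct.induction_on with
    | zero => simp [Tmap_zero₂, TensorProduct.tmul_zero, TensorProduct.zero_tmul]
    | add u v hu hv => simp only [Tmap_add₂, TensorProduct.add_tmul, TensorProduct.tmul_add,
        map_add, hu, hv]
    | tmul h' η =>
      rw [Tmap_tmul, Tmap_tmul, mulDD_tmul, mulD_tmul, mulD_tmul, mulD_tmul, Tmap_tmul]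

lemma Phi2_mul {n : ℕ} (b : Module.Basis (Fin n) k H) (u u' : H ⊗[k] H)
    (v v' : Module.Dual k H ⊗[k] Module.Dual k H) :
    Phi2 b ((u * u') ⊗ₜ[k] convLL (v ⊗ₜ[k] v')) =
      mulDD k H (Phi2 b (u ⊗ₜ[k] v) ⊗ₜ[k] Phi2 b (u' ⊗ₜ[k] v')) := by
  induction u using TensorProduct.induction_on with
  | zero => simp [TensorProduct.zero_tmul]
  | add a₁ a₂ h₁ h₂ => simp only [add_mul, TensorProduct.add_tmul, map_add, h₁, h₂]
  | tmul f₁ f₂ =>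
    induction u' using TensorProduct.induction_on with
    | zero => simp [TensorProduct.zero_tmul, TensorProduct.tmul_zero]
    | add a₁ a₂ h₁ h₂ => simp only [mul_add, TensorProduct.add_tmul, TensorProduct.tmul_add,
        map_add, h₁, h₂]
    | tmul g₁ g₂ =>
      induction v using TensorProduct.induction_on with
      | zero => simp [TensorProduct.zero_tmul, TensorProduct.tmul_zero]
      | add a₁ a₂ h₁ h₂ => simp only [TensorProduct.add_tmul, TensorProduct.tmul_add,
          map_add, h₁, h₂]
      | tmul x₁ x₂ =>
        induction v' using TensorProduct.induction_on with
        | zero => simp [TensorProduct.zero_tmul, TensorProduct.tmul_zero]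
        | add a₁ a₂ h₁ h₂ => simp only [TensorProduct.add_tmul, TensorProduct.tmul_add,
            map_add, h₁, h₂]
        | tmul y₁ y₂ =>
          rw [Algebra.TensorProduct.tmul_mul_tmul, convLL_tmul, Phi2_tmul, Phi2_tmul, Phi2_tmul,
            mulDD_Tmap, ← adW_mul, mulD_tmul]

lemma epsD_tmul (f : H) (x : Module.Dual k H) :
    epsD k H (f ⊗ₜ[k] x) = Coalgebra.counit f * x 1 := by
  simp [epsD]

lemma convL_one (x y : Module.Dual k H) : convL k H (x ⊗ₜ[k] y) 1 = x 1 * y 1 := by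
  rw [convL_apply, Bialgebra.comul_one, Algebra.TensorProduct.one_def,
    TensorProduct.dualDistrib_apply]

end DrinAux

open DrinAux

/-- The comultiplication `Δ_D : D_H → D_H ⊗ D_H` and the counit
`ε_D : D_H → k` of the Drinfeld codouble are unital algebra homomorphisms, where
`D_H = H ⊗ H*` carries the tensor product algebra structure and `D_H ⊗ D_H` the tensor
product algebra structure of two copies of `D_H`; hence `D_H` is a bialgebra.  Here `Δ̂`
is the comultiplication of `(H*)^cop`, characterized by `Δ̂(x)(a ⊗ b) = x(ba)`. -/
theorem drinfeld_codouble_bialgebra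
    {k H : Type*} [Field k] [Ring H] [HopfAlgebra k H] {n : ℕ} (b : Module.Basis (Fin n) k H)
    (Δhat : Module.Dual k H →ₗ[k] Module.Dual k H ⊗[k] Module.Dual k H)
    (hΔhat : ∀ (x : Module.Dual k H) (a c : H),
      TensorProduct.dualDistrib k H H (Δhat x) (a ⊗ₜ[k] c) = x (c * a)) :
    (∀ z z' : H ⊗[k] Module.Dual k H,
      deltaD b Δhat (mulD k H (z ⊗ₜ[k] z'))
        = mulDD k H (deltaD b Δhat z ⊗ₜ[k] deltaD b Δhat z')) ∧
    (deltaD b Δhat (oneD k H) = oneD k H ⊗ₜ[k] oneD k H) ∧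
    (∀ z z' : H ⊗[k] Module.Dual k H,
      epsD k H (mulD k H (z ⊗ₜ[k] z')) = epsD k H z * epsD k H z') ∧
    (epsD k H (oneD k H) = 1) := by
  have hd : ∀ (f : H) (x : Module.Dual k H),
      deltaD b Δhat (f ⊗ₜ[k] x) = Phi2 b (Coalgebra.comul f ⊗ₜ[k] Δhat x) := by
    intro f x
    rw [deltaD_eq]
    simp
  refine ⟨?_, ?_, ?_, ?_⟩
  · intro z z'
    induction z using TensorProduct.induction_on with
    | zero => simp [TensorProduct.zero_tmul]
    | add a₁ a₂ h₁ h₂ => simp only [TensorProduct.add_tmul, map_add, h₁, h₂]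
    | tmul f x =>
      induction z' using TensorProduct.induction_on with
      | zero => simp [TensorProduct.zero_tmul, TensorProduct.tmul_zero]
      | add a₁ a₂ h₁ h₂ => simp only [TensorProduct.add_tmul, TensorProduct.tmul_add,
          map_add, h₁, h₂]
      | tmul g y =>
        rw [mulD_tmul, hd, hd, hd, Bialgebra.comul_mul, dhat_convL b Δhat hΔhat, Phi2_mul]
  · rw [oneD, hd, Bialgebra.comul_one, dhat_counit b Δhat hΔhat,
      Algebra.TensorProduct.one_def, Phi2_tmul]
    rw [show ((1 : H) ⊗ₜ[k] (Coalgebra.counit (R := k) (A := H))) = oneD k H from rfl,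
      adW_one, oneD, Tmap_tmul]
  · intro z z'
    induction z using TensorProduct.induction_on with
    | zero => simp [TensorProduct.zero_tmul]
    | add a₁ a₂ h₁ h₂ => simp only [TensorProduct.add_tmul, map_add, h₁, h₂, add_mul]
    | tmul f x =>
      induction z' using TensorProduct.induction_on with
      | zero => simp [TensorProduct.zero_tmul, TensorProduct.tmul_zero]
      | add a₁ a₂ h₁ h₂ => simp only [TensorProduct.add_tmul, TensorProduct.tmul_add,
          map_add, h₁, h₂, mul_add]
      | tmul g y =>
        rw [mulD_tmul, epsD_tmul, epsD_tmul, epsD_tmul, Bialgebra.counit_mul, convL_one]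
        ring
  · rw [oneD, epsD_tmul]
    simp


end
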